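/- Let w ≠ 0, b ∈ ℝ and ε ∈ {1, −1}. On the open set U = {(ρ,z) ∈ ℝ² : ρ > 0 and ε ln ρ + b > 0}, define η(ρ) = ρ |w| (ε ln ρ + b), σ = ln(η/ρ²), and ω(ρ,z) = w z. Then (σ, ω) satisfies the reduced vacuum Einstein equations Δσ = −e^{−2σ}(ω_ρ² + ω_z²)/ρ⁴ and Δω = 4ω_ρ/ρ + 2(ω_ρσ_ρ + ω_zσ_z) on U. -/

import Mathlib

/-- Partial derivative with respect to the first (ρ) variable. -/
noncomputable def pdr (f : ℝ × ℝ → ℝ) (p : ℝ × ℝ) : ℝ :=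
  deriv (fun x => f (x, p.2)) p.1

/-- Partial derivative with respect to the second (z) variable. -/
noncomputable def pdz (f : ℝ × ℝ → ℝ) (p : ℝ × ℝ) : ℝ :=
  deriv (fun y => f (p.1, y)) p.2

/-- The flat cylindrically symmetric Laplacian Δ = ∂²_ρ + (1/ρ)∂_ρ + ∂²_z. -/
noncomputable def lap (f : ℝ × ℝ → ℝ) (p : ℝ × ℝ) : ℝ :=
  pdr (pdr f) p + pdr f p / p.1 + pdz (pdz f) p

lemma F_eq (w b ε t : ℝ) (hw : w ≠ 0) (h1 : 0 < t) (h2 : 0 < ε * Real.log t + b) :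
    Real.log (t * |w| * (ε * Real.log t + b) / t ^ 2)
      = Real.log |w| + Real.log (ε * Real.log t + b) - Real.log t := by
  have hw' : |w| ≠ 0 := abs_ne_zero.mpr hw
  have heq : t * |w| * (ε * Real.log t + b) / t ^ 2 = |w| * (ε * Real.log t + b) / t := by
    field_simp
  rw [heq, Real.log_div (mul_ne_zero hw' h2.ne') h1.ne', Real.log_mul hw' h2.ne']

lemma hasDerivF (w b ε t : ℝ) (h1 : 0 < t) (h2 : 0 < ε * Real.log t + b) :
    HasDerivAt (fun s => Real.log |w| + Real.log (ε * Real.log s + b) - Real.log s)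
      ((ε * Real.log t + b)⁻¹ * (ε * t⁻¹) - t⁻¹) t := by
  have hlog : HasDerivAt Real.log t⁻¹ t := Real.hasDerivAt_log h1.ne'
  have hin : HasDerivAt (fun s => ε * Real.log s + b) (ε * t⁻¹) t :=
    (hlog.const_mul ε).add_const b
  have h3 : HasDerivAt (fun s => Real.log (ε * Real.log s + b))
      ((ε * Real.log t + b)⁻¹ * (ε * t⁻¹)) t :=
    by have := (Real.hasDerivAt_log h2.ne').comp t hin; exact this
  exact (h3.const_add _).sub hlog

lemma pdr_sigma (w b ε : ℝ) (hw : w ≠ 0) (η σ : ℝ × ℝ → ℝ)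
    (hη : ∀ p : ℝ × ℝ, η p = p.1 * |w| * (ε * Real.log p.1 + b))
    (hσ : ∀ p : ℝ × ℝ, σ p = Real.log (η p / p.1 ^ 2))
    (q : ℝ × ℝ) (h1 : 0 < q.1) (h2 : 0 < ε * Real.log q.1 + b) :
    pdr σ q = (ε * Real.log q.1 + b)⁻¹ * (ε * q.1⁻¹) - q.1⁻¹ := by
  have hfun : (fun x => σ (x, q.2)) = fun x => Real.log (x * |w| * (ε * Real.log x + b) / x ^ 2) := by
    funext x; rw [hσ, hη]
  have hev : ∀ᶠ t in nhds q.1, 0 < t ∧ 0 < ε * Real.log t + b := by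
    have ha : ∀ᶠ t in nhds q.1, 0 < t := eventually_gt_nhds h1
    have hc : ContinuousAt (fun t => ε * Real.log t + b) q.1 :=
      ((continuousAt_const.mul (Real.continuousAt_log h1.ne')).add continuousAt_const)
    have hb : ∀ᶠ t in nhds q.1, 0 < ε * Real.log t + b := hc.eventually (eventually_gt_nhds h2)
    exact ha.and hb
  have heq : (fun x => Real.log (x * |w| * (ε * Real.log x + b) / x ^ 2))
      =ᶠ[nhds q.1] (fun s => Real.log |w| + Real.log (ε * Real.log s + b) - Real.log s) := by
    filter_upwards [hev] with t ht
    exact F_eq w b ε t hw ht.1 ht.2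
  have hD : HasDerivAt (fun x => σ (x, q.2))
      ((ε * Real.log q.1 + b)⁻¹ * (ε * q.1⁻¹) - q.1⁻¹) q.1 := by
    rw [hfun]
    exact (hasDerivF w b ε q.1 h1 h2).congr_of_eventuallyEq heq
  exact hD.deriv

/-- the Lewis family (II±), with η = ρ|w|(±ln ρ + b) and
ω = wz, satisfies the reduced vacuum Einstein equations on the open set where
ρ > 0 and ±ln ρ + b > 0. -/
theorem lewis_II_solves_reduced_einstein
    (w b ε : ℝ) (hw : w ≠ 0) (hε : ε = 1 ∨ ε = -1)
    (η σ ω : ℝ × ℝ → ℝ)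
    (hη : ∀ p : ℝ × ℝ, η p = p.1 * |w| * (ε * Real.log p.1 + b))
    (hσ : ∀ p : ℝ × ℝ, σ p = Real.log (η p / p.1 ^ 2))
    (hω : ∀ p : ℝ × ℝ, ω p = w * p.2) :
    ∀ p : ℝ × ℝ, 0 < p.1 → 0 < ε * Real.log p.1 + b →
      lap σ p = - Real.exp (-2 * σ p) * ((pdr ω p) ^ 2 + (pdz ω p) ^ 2) / p.1 ^ 4
      ∧ lap ω p = 4 * pdr ω p / p.1
          + 2 * (pdr ω p * pdr σ p + pdz ω p * pdz σ p) := by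
  intro p hρ hg
  set x := p.1 with hx
  have hx0 : x ≠ 0 := hρ.ne'
  have hg0 : ε * Real.log x + b ≠ 0 := hg.ne'
  have hw' : (0:ℝ) < |w| := abs_pos.mpr hw
  -- ω derivatives
  have hpdrω : ∀ q : ℝ × ℝ, pdr ω q = 0 := by
    intro q
    have : (fun t => ω (t, q.2)) = fun _ => w * q.2 := funext fun t => hω _
    rw [pdr, this, deriv_const]
  have hpdzω : ∀ q : ℝ × ℝ, pdz ω q = w := by
    intro q
    have : (fun y => ω (q.1, y)) = fun y => w * y := funext fun y => hω _
    rw [pdz, this]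
    simpa using ((hasDerivAt_id q.2).const_mul w).deriv
  have hpdrpdrω : pdr (pdr ω) p = 0 := by
    have : (fun t => pdr ω (t, p.2)) = fun _ => (0:ℝ) := funext fun t => hpdrω _
    rw [pdr, this, deriv_const]
  have hpdzpdzω : pdz (pdz ω) p = 0 := by
    have : (fun y => pdz ω (p.1, y)) = fun _ => w := funext fun y => hpdzω _
    rw [pdz, this, deriv_const]
  -- σ: z derivatives vanish
  have hpdzσ : ∀ q : ℝ × ℝ, pdz σ q = 0 := by
    intro q
    have : (fun y => σ (q.1, y))
        = fun _ => Real.log (q.1 * |w| * (ε * Real.log q.1 + b) / q.1 ^ 2) := by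
      funext y; rw [hσ, hη]
    rw [pdz, this, deriv_const]
  have hpdzpdzσ : pdz (pdz σ) p = 0 := by
    have : (fun y => pdz σ (p.1, y)) = fun _ => (0:ℝ) := funext fun y => hpdzσ _
    rw [pdz, this, deriv_const]
  -- σ: first ρ derivative
  have hpdrσ : pdr σ p = (ε * Real.log x + b)⁻¹ * (ε * x⁻¹) - x⁻¹ :=
    pdr_sigma w b ε hw η σ hη hσ p hρ hg
  -- σ: second ρ derivative
  have hev : ∀ᶠ t in nhds x, 0 < t ∧ 0 < ε * Real.log t + b := by
    have ha : ∀ᶠ t in nhds x, 0 < t := eventually_gt_nhds hρ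
    have hc : ContinuousAt (fun t => ε * Real.log t + b) x :=
      ((continuousAt_const.mul (Real.continuousAt_log hx0)).add continuousAt_const)
    exact ha.and (hc.eventually (eventually_gt_nhds hg))
  have hpdr2σ : pdr (pdr σ) p
      = -(ε * x⁻¹) / (ε * Real.log x + b) ^ 2 * (ε * x⁻¹)
        + (ε * Real.log x + b)⁻¹ * (ε * -(x ^ 2)⁻¹) - -(x ^ 2)⁻¹ := by
    have heq : (fun t => pdr σ (t, p.2))
        =ᶠ[nhds x] (fun t => (ε * Real.log t + b)⁻¹ * (ε * t⁻¹) - t⁻¹) := by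
      filter_upwards [hev] with t ht
      exact pdr_sigma w b ε hw η σ hη hσ (t, p.2) ht.1 ht.2
    have hin : HasDerivAt (fun s => ε * Real.log s + b) (ε * x⁻¹) x :=
      ((Real.hasDerivAt_log hx0).const_mul ε).add_const b
    have hD : HasDerivAt (fun t => (ε * Real.log t + b)⁻¹ * (ε * t⁻¹) - t⁻¹)
        (-(ε * x⁻¹) / (ε * Real.log x + b) ^ 2 * (ε * x⁻¹)
          + (ε * Real.log x + b)⁻¹ * (ε * -(x ^ 2)⁻¹) - -(x ^ 2)⁻¹) x := by
      exact ((hin.inv hg0).mul ((hasDerivAt_inv hx0).const_mul ε)).sub (hasDerivAt_inv hx0)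
    rw [pdr]
    rw [heq.deriv_eq]
    exact hD.deriv
  -- exp term
  have hηpos : 0 < η p / x ^ 2 := by
    rw [hη]
    exact div_pos (by positivity) (by positivity)
  have hexp : Real.exp (-2 * σ p) = ((η p / x ^ 2)⁻¹) ^ 2 := by
    have : (-2 : ℝ) * σ p = (-(σ p)) + (-(σ p)) := by ring
    rw [this, Real.exp_add, Real.exp_neg, hσ, Real.exp_log hηpos]
    ring
  have hε2 : ε * ε = 1 := by rcases hε with h | h <;> rw [h] <;> norm_num
  set g := ε * Real.log x + b with hgd
  set a := |w| with ha
  have ha0 : a ≠ 0 := abs_ne_zero.mpr hw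
  have hsq : w ^ 2 = a ^ 2 := (sq_abs w).symm
  constructor
  · rw [lap, hpdr2σ, hpdrσ, hpdzpdzσ, hexp, hpdrω p, hpdzω p, hη, ← hx, ← hgd, hsq]
    field_simp
    linear_combination (-a ^ 2) * hε2
  · rw [lap, hpdrpdrω, hpdzpdzω, hpdrω p, hpdzω p, hpdzσ p]
    simp
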